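/- Every classical Kripke model C = (K,≤,D,strong-refutation,exploding) gives rise to an intuitionistic Kripke model with exploding worlds I on the same frame, where atomic intuitionistic forcing is defined as classical (non-strong) forcing, such that for every world w and formula A: w intuitionistically forces A* in I if and only if w classically forces A in C, where A* is the Gödel–Gentzen double-negation translation leaving atoms, ⊥ and ⊤ unchanged, commuting with ∧, →, ∀, and setting (A∨B)* = ¬(¬A* ∧ ¬B*) and (∃x.A)* = ¬∀x.¬A*. -/
import Mathlib


/-- Formulas of predicate logic (higher-order abstract syntax over a
type `C` of constants/domain elements). -/
inductive Formula (C : Type) : Type where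
  | atom : ℕ → List C → Formula C
  | top : Formula C
  | bot : Formula C
  | and : Formula C → Formula C → Formula C
  | or : Formula C → Formula C → Formula C
  | imp : Formula C → Formula C → Formula C
  | all : (C → Formula C) → Formula C
  | ex : (C → Formula C) → Formula C

/-- The data of a classical Kripke model: possible worlds, ordering,
domain function, strong refutation on atomic sentences, exploding predicate. -/
structure CKPre (C : Type) where
  K : Type
  le : K → K → Prop
  D : K → Set C
  srefAtom : K → ℕ → List C → Prop
  expl : K → Prop

namespace CKPre

variable {C : Type}

/-- Orthogonality: every greater world satisfying `S` is exploding. -/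
def orth (M : CKPre C) (S : M.K → Prop) (w : M.K) : Prop :=
  ∀ w', M.le w w' → S w' → M.expl w'

/-- Strong refutation, extended from atomic to composite sentences;
(non-strong) forcing and refutation are expressed via `orth`. -/
def sref (M : CKPre C) : Formula C → M.K → Prop
  | .atom p args, w => M.srefAtom w p args
  | .bot, _ => True
  | .top, _ => False
  | .and A B, w => M.orth (M.orth (M.sref A)) w ∨ M.orth (M.orth (M.sref B)) w
  | .or A B, w => M.orth (M.orth (M.sref A)) w ∧ M.orth (M.orth (M.sref B)) w
  | .imp A B, w => M.orth (M.sref A) w ∧ M.orth (M.orth (M.sref B)) w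
  | .all A, w => ∃ d ∈ M.D w, M.orth (M.orth (M.sref (A d))) w
  | .ex A, w => ∀ w', M.le w w' → ∀ d ∈ M.D w', M.orth (M.orth (M.sref (A d))) w'

/-- `w` forces `A`: every `w' ≥ w` strongly refuting `A` is exploding. -/
def force (M : CKPre C) (A : Formula C) : M.K → Prop := M.orth (M.sref A)

/-- `w` refutes `A`: every `w' ≥ w` forcing `A` is exploding. -/
def refute (M : CKPre C) (A : Formula C) : M.K → Prop := M.orth (M.force A)

end CKPre

/-- A classical Kripke model: the data together with the required properties
(inhabited poset of worlds, monotone domain, monotone strong refutation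
on atoms with arguments in the domain, monotone exploding predicate). -/
structure CKModel (C : Type) where
  pre : CKPre C
  le_refl : ∀ w, pre.le w w
  le_trans : ∀ w₁ w₂ w₃, pre.le w₁ w₂ → pre.le w₂ w₃ → pre.le w₁ w₃
  le_antisymm : ∀ w₁ w₂, pre.le w₁ w₂ → pre.le w₂ w₁ → w₁ = w₂
  nonempty : Nonempty pre.K
  D_mono : ∀ w w', pre.le w w' → pre.D w ⊆ pre.D w'
  srefAtom_dom : ∀ w p args, pre.srefAtom w p args → ∀ d ∈ args, d ∈ pre.D w
  srefAtom_mono : ∀ w w' p args, pre.le w w' → pre.srefAtom w p args → pre.srefAtom w' p args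
  expl_mono : ∀ w w', pre.le w w' → pre.expl w → pre.expl w'

/-- Negation ¬A := A → ⊥. -/
def Formula.neg {C : Type} (A : Formula C) : Formula C := Formula.imp A Formula.bot

namespace CKPre

variable {C : Type}

/-- The intuitionistic Kripke model with exploding worlds induced by a
classical Kripke model: same frame, same domain, same exploding predicate;
intuitionistic forcing of atoms is classical (non-strong) forcing, the other
clauses are the standard intuitionistic ones except that `⊥` is forced
exactly at exploding worlds. -/
def iforce (M : CKPre C) : Formula C → M.K → Prop
  | .atom p args, w => M.force (.atom p args) w
  | .top, _ => True
  | .bot, w => M.expl w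
  | .and A B, w => M.iforce A w ∧ M.iforce B w
  | .or A B, w => M.iforce A w ∨ M.iforce B w
  | .imp A B, w => ∀ w', M.le w w' → M.iforce A w' → M.iforce B w'
  | .all A, w => ∀ w', M.le w w' → ∀ d ∈ M.D w', M.iforce (A d) w'
  | .ex A, w => ∃ d ∈ M.D w, M.iforce (A d) w

end CKPre

/-- The Gödel–Gentzen double-negation translation, leaving atoms, `⊥` and `⊤`
unchanged, commuting with `∧`, `→`, `∀`, and with
`(A ∨ B)* = ¬(¬A* ∧ ¬B*)` and `(∃x.A)* = ¬∀x.¬A*`. -/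
def Formula.gg {C : Type} : Formula C → Formula C
  | .atom p args => .atom p args
  | .top => .top
  | .bot => .bot
  | .and A B => .and A.gg B.gg
  | .imp A B => .imp A.gg B.gg
  | .all A => .all (fun d => (A d).gg)
  | .or A B => Formula.neg (.and (Formula.neg A.gg) (Formula.neg B.gg))
  | .ex A => Formula.neg (.all (fun d => Formula.neg (A d).gg))

section Aux

variable {C : Type} (M : CKModel C)

lemma CK.orth_mono {S : M.pre.K → Prop} {w w' : M.pre.K} (h : M.pre.le w w')
    (ho : M.pre.orth S w) : M.pre.orth S w' :=
  fun w'' hle hs => ho w'' (M.le_trans _ _ _ h hle) hs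

lemma CK.expl_orth {S : M.pre.K → Prop} {w : M.pre.K} (he : M.pre.expl w) :
    M.pre.orth S w :=
  fun w' hle _ => M.expl_mono _ _ hle he

lemma CK.sref_mono (A : Formula C) {w w' : M.pre.K} (h : M.pre.le w w')
    (hs : M.pre.sref A w) : M.pre.sref A w' := by
  cases A with
  | atom p args => exact M.srefAtom_mono _ _ _ _ h hs
  | top => exact hs
  | bot => trivial
  | and A B => exact hs.imp (CK.orth_mono M h) (CK.orth_mono M h)
  | or A B => exact ⟨CK.orth_mono M h hs.1, CK.orth_mono M h hs.2⟩
  | imp A B => exact ⟨CK.orth_mono M h hs.1, CK.orth_mono M h hs.2⟩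
  | all A =>
      obtain ⟨d, hd, ho⟩ := hs
      exact ⟨d, M.D_mono _ _ h hd, CK.orth_mono M h ho⟩
  | ex A => exact fun w'' h'' => hs w'' (M.le_trans _ _ _ h h'')

lemma CK.force_mono (A : Formula C) {w w' : M.pre.K} (h : M.pre.le w w')
    (hf : M.pre.force A w) : M.pre.force A w' :=
  CK.orth_mono M h hf

/-- If `sref A w`, then `orth (force A) w`. -/
lemma CK.sref_oforce (A : Formula C) {w : M.pre.K} (hs : M.pre.sref A w) :
    M.pre.orth (M.pre.force A) w :=
  fun w' hle hf => hf w' (M.le_refl _) (CK.sref_mono M A hle hs)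

/-- for every classical Kripke model, every world `w` and every
formula `A`, `w` intuitionistically forces `A*` (in the induced intuitionistic
Kripke model with exploding worlds) iff `w` classically forces `A`. -/
theorem iforce_gg_iff_force {C : Type} (M : CKModel C) (A : Formula C) (w : M.pre.K) :
    M.pre.iforce A.gg w ↔ M.pre.force A w := by
  induction A generalizing w with
  | atom p args => exact Iff.rfl
  | top => exact ⟨fun _ w' _ hs => hs.elim, fun _ => trivial⟩
  | bot =>
      exact ⟨fun he => CK.expl_orth M he, fun hf => hf w (M.le_refl _) trivial⟩
  | and A B ihA ihB =>
      constructor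
      · rintro ⟨hA, hB⟩ w' hle hs
        rcases hs with h | h
        · exact h w' (M.le_refl _) (CK.force_mono M A hle ((ihA w).mp hA))
        · exact h w' (M.le_refl _) (CK.force_mono M B hle ((ihB w).mp hB))
      · intro hf
        constructor
        · exact (ihA w).mpr fun w' hle hs =>
            hf w' hle (Or.inl (CK.sref_oforce M A hs))
        · exact (ihB w).mpr fun w' hle hs =>
            hf w' hle (Or.inr (CK.sref_oforce M B hs))
  | or A B ihA ihB =>
      constructor
      · intro h w' hle hs
        refine h w' hle ?_
        constructor
        · intro w2 hle' hA
          exact hs.1 w2 hle' ((ihA w2).mp hA)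
        · intro w2 hle' hB
          exact hs.2 w2 hle' ((ihB w2).mp hB)
      · intro h w' hle hs
        refine h w' hle ?_
        constructor
        · intro w2 hle' hA
          exact hs.1 w2 hle' ((ihA w2).mpr hA)
        · intro w2 hle' hB
          exact hs.2 w2 hle' ((ihB w2).mpr hB)
  | imp A B ihA ihB =>
      constructor
      · intro h w' hle hs
        have hB : M.pre.force B w' := (ihB w').mp (h w' hle ((ihA w').mpr hs.1))
        exact hs.2 w' (M.le_refl _) hB
      · intro h w' hle hA
        refine (ihB w').mpr fun w2 hle' hsB => ?_
        refine h w2 (M.le_trans _ _ _ hle hle') ?_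
        refine ⟨CK.force_mono M A hle' ((ihA w').mp hA), ?_⟩
        exact CK.sref_oforce M B hsB
  | all A ih =>
      constructor
      · intro h w' hle hs
        obtain ⟨d, hd, ho⟩ := hs
        exact ho w' (M.le_refl _) ((ih d w').mp (h w' hle d hd))
      · intro h w' hle d hd
        refine (ih d w').mpr fun w2 hle' hsA => ?_
        refine h w2 (M.le_trans _ _ _ hle hle') ?_
        exact ⟨d, M.D_mono _ _ hle' hd, CK.sref_oforce M (A d) hsA⟩
  | ex A ih =>
      constructor
      · intro h w' hle hs
        refine h w' hle fun w2 hle' d hd w3 hle2 hf => ?_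
        exact hs w2 hle' d hd w3 hle2 ((ih d w3).mp hf)
      · intro h w' hle hs
        refine h w' hle fun w2 hle' d hd w3 hle2 hf => ?_
        exact hs w2 hle' d hd w3 hle2 ((ih d w3).mpr hf)
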